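/- Define I(T) = ∫₀^T ∫₀^t ∫₀^∞ e^{−r² t/2} e^{−r² s/2} e^{−r(t − s)} r dr ds dt for T > 0. Then there exist a constant C > 0 and T₀ > 0 such that I(T) ≤ C T^{3/4} for all T ≥ T₀; in particular I(T)/T → 0 as T → ∞. (This follows from the bound I(T) ≤ −2T log(1 − ε/2) + 3ε^{−2} for 0 < ε < 2 by choosing ε so that 1 − ε/2 = e^{−T^{−1/4}}.) -/

import Mathlib

open MeasureTheory Real Filter

/-- `I T = ∫₀^T ∫₀^t ∫₀^∞ e^{-r²t/2} e^{-r²s/2} e^{-r(t-s)} r dr ds dt`. -/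
noncomputable def Iint (T : ℝ) : ℝ :=
  ∫ t in Set.Ioc (0 : ℝ) T, ∫ s in Set.Ioc (0 : ℝ) t, ∫ r in Set.Ioi (0 : ℝ),
    Real.exp (-(r ^ 2 * t / 2)) * Real.exp (-(r ^ 2 * s / 2)) *
      Real.exp (-(r * (t - s))) * r

open Set


lemma gauss_deriv (b : ℝ) (hb : 0 < b) (r : ℝ) :
    HasDerivAt (fun x : ℝ => -Real.exp (-(x^2*b)) / (2*b)) (Real.exp (-(r^2*b)) * r) r := by
  have h1 : HasDerivAt (fun x : ℝ => -(x^2*b)) (-(2*r*b)) r := by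
    have := ((hasDerivAt_pow 2 r).mul_const b).fun_neg
    simpa [mul_comm, mul_assoc, mul_left_comm] using this
  have h2 := (h1.exp).fun_neg.div_const (2*b)
  refine h2.congr_deriv ?_
  field_simp

lemma gauss_tendsto (b : ℝ) (hb : 0 < b) :
    Tendsto (fun x : ℝ => -Real.exp (-(x^2*b)) / (2*b)) atTop (nhds 0) := by
  have h : Tendsto (fun x : ℝ => -(x^2*b)) atTop atBot := by
    apply tendsto_neg_atBot_iff.mpr
    exact (tendsto_pow_atTop two_ne_zero).atTop_mul_const hb
  have := (Real.tendsto_exp_atBot.comp h).neg.div_const (2*b)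
  simpa using this

lemma gauss_cont (b : ℝ) : Continuous (fun x : ℝ => -Real.exp (-(x^2*b)) / (2*b)) := by
  continuity

lemma gauss_int (b : ℝ) (hb : 0 < b) :
    IntegrableOn (fun r => Real.exp (-(r^2*b)) * r) (Ioi (0:ℝ)) :=
  integrableOn_Ioi_deriv_of_nonneg (gauss_cont b).continuousWithinAt
    (fun x _ => gauss_deriv b hb x)
    (fun x hx => mul_nonneg (Real.exp_nonneg _) (le_of_lt hx)) (gauss_tendsto b hb)

lemma gauss_val (b : ℝ) (hb : 0 < b) :
    ∫ r in Ioi (0:ℝ), Real.exp (-(r^2*b)) * r = 1/(2*b) := by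
  have h := integral_Ioi_of_hasDerivAt_of_nonneg (gauss_cont b).continuousWithinAt
    (fun x (_ : x ∈ Ioi 0) => gauss_deriv b hb x)
    (fun x hx => mul_nonneg (Real.exp_nonneg _) (le_of_lt hx)) (gauss_tendsto b hb)
  rw [h]
  field_simp
  simp


lemma lin_deriv (c : ℝ) (hc : 0 < c) (r : ℝ) :
    HasDerivAt (fun x : ℝ => -((x*c+1) * Real.exp (-(x*c))) / c^2)
      (Real.exp (-(r*c)) * r) r := by
  have h1 : HasDerivAt (fun x : ℝ => -(x*c)) (-c) r := by
    simpa using ((hasDerivAt_id r).mul_const c).fun_neg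
  have h2 : HasDerivAt (fun x : ℝ => x*c+1) c r := by
    simpa using ((hasDerivAt_id r).mul_const c).add_const 1
  have h3 := ((h2.fun_mul h1.exp).fun_neg.div_const (c^2))
  refine h3.congr_deriv ?_
  field_simp
  ring

lemma lin_tendsto (c : ℝ) (hc : 0 < c) :
    Tendsto (fun x : ℝ => -((x*c+1) * Real.exp (-(x*c))) / c^2) atTop (nhds 0) := by
  have hcomp : Tendsto (fun x : ℝ => x*c) atTop atTop :=
    Tendsto.atTop_mul_const hc tendsto_id
  have h1 : Tendsto (fun u : ℝ => u * Real.exp (-u)) atTop (nhds 0) := by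
    simpa using Real.tendsto_pow_mul_exp_neg_atTop_nhds_zero 1
  have h2 : Tendsto (fun u : ℝ => Real.exp (-u)) atTop (nhds 0) := by
    exact Real.tendsto_exp_atBot.comp (tendsto_neg_atBot_iff.mpr tendsto_id)
  have h3 : Tendsto (fun u : ℝ => (u+1) * Real.exp (-u)) atTop (nhds 0) := by
    have := h1.add h2
    simpa [add_mul] using this
  have := ((h3.comp hcomp).neg).div_const (c^2)
  simpa [Function.comp] using this

lemma lin_cont (c : ℝ) : Continuous (fun x : ℝ => -((x*c+1) * Real.exp (-(x*c))) / c^2) := by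
  continuity

lemma lin_int (c : ℝ) (hc : 0 < c) :
    IntegrableOn (fun r => Real.exp (-(r*c)) * r) (Ioi (0:ℝ)) :=
  integrableOn_Ioi_deriv_of_nonneg (lin_cont c).continuousWithinAt
    (fun x _ => lin_deriv c hc x)
    (fun x hx => mul_nonneg (Real.exp_nonneg _) (le_of_lt hx)) (lin_tendsto c hc)

lemma lin_val (c : ℝ) (hc : 0 < c) :
    ∫ r in Ioi (0:ℝ), Real.exp (-(r*c)) * r = 1/c^2 := by
  have h := integral_Ioi_of_hasDerivAt_of_nonneg (lin_cont c).continuousWithinAt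
    (fun x (_ : x ∈ Ioi 0) => lin_deriv c hc x)
    (fun x hx => mul_nonneg (Real.exp_nonneg _) (le_of_lt hx)) (lin_tendsto c hc)
  rw [h]
  field_simp
  simp

noncomputable def J (t s : ℝ) : ℝ :=
  ∫ r in Ioi (0:ℝ), Real.exp (-(r ^ 2 * t / 2)) * Real.exp (-(r ^ 2 * s / 2)) *
      Real.exp (-(r * (t - s))) * r



lemma Jb1 (t s : ℝ) (ht : 0 < t) (hs : 0 ≤ s) (hst : s ≤ t) : J t s ≤ 1/t := by
  unfold J
  have hb : (0:ℝ) < t/2 := by positivity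
  have hle : (∫ r in Ioi (0:ℝ), Real.exp (-(r ^ 2 * t / 2)) * Real.exp (-(r ^ 2 * s / 2)) *
      Real.exp (-(r * (t - s))) * r) ≤ ∫ r in Ioi (0:ℝ), Real.exp (-(r^2*(t/2))) * r := by
    apply integral_mono_of_nonneg
    · filter_upwards [ae_restrict_mem measurableSet_Ioi] with r hr
      have : (0:ℝ) < r := hr
      positivity
    · exact gauss_int (t/2) hb
    · filter_upwards [ae_restrict_mem measurableSet_Ioi] with r hr
      have hr0 : (0:ℝ) < r := hr
      have e1 : Real.exp (-(r ^ 2 * s / 2)) ≤ 1 := Real.exp_le_one_iff.mpr (neg_nonpos.mpr (by positivity))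
      have e2 : Real.exp (-(r * (t - s))) ≤ 1 := Real.exp_le_one_iff.mpr (by nlinarith)
      have h2 : r ^ 2 * t / 2 = r^2*(t/2) := by ring
      calc Real.exp (-(r ^ 2 * t / 2)) * Real.exp (-(r ^ 2 * s / 2)) *
            Real.exp (-(r * (t - s))) * r
          ≤ Real.exp (-(r ^ 2 * t / 2)) * 1 * 1 * r := by
            gcongr <;> positivity
        _ = Real.exp (-(r^2*(t/2))) * r := by rw [h2]; ring
  rw [gauss_val (t/2) hb] at hle
  calc _ ≤ 1/(2*(t/2)) := hle
    _ = 1/t := by ring_nf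

lemma Jb2 (t s : ℝ) (ht : 0 ≤ t) (hs : 0 ≤ s) (hst : s < t) : J t s ≤ ((t-s)^2)⁻¹ := by
  unfold J
  have hc : (0:ℝ) < t - s := by linarith
  have hle : (∫ r in Ioi (0:ℝ), Real.exp (-(r ^ 2 * t / 2)) * Real.exp (-(r ^ 2 * s / 2)) *
      Real.exp (-(r * (t - s))) * r) ≤ ∫ r in Ioi (0:ℝ), Real.exp (-(r*(t-s))) * r := by
    apply integral_mono_of_nonneg
    · filter_upwards [ae_restrict_mem measurableSet_Ioi] with r hr
      have : (0:ℝ) < r := hr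
      positivity
    · exact lin_int (t-s) hc
    · filter_upwards [ae_restrict_mem measurableSet_Ioi] with r hr
      have hr0 : (0:ℝ) < r := hr
      have e1 : Real.exp (-(r ^ 2 * t / 2)) ≤ 1 := Real.exp_le_one_iff.mpr (neg_nonpos.mpr (by positivity))
      have e2 : Real.exp (-(r ^ 2 * s / 2)) ≤ 1 := Real.exp_le_one_iff.mpr (neg_nonpos.mpr (by positivity))
      calc Real.exp (-(r ^ 2 * t / 2)) * Real.exp (-(r ^ 2 * s / 2)) *
            Real.exp (-(r * (t - s))) * r
          ≤ 1 * 1 * Real.exp (-(r * (t - s))) * r := by gcongr <;> positivity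
        _ = Real.exp (-(r*(t-s))) * r := by ring
  rw [lin_val (t-s) hc] at hle
  simpa [one_div] using hle

lemma Jnonneg (t s : ℝ) : 0 ≤ J t s := by
  unfold J
  apply setIntegral_nonneg measurableSet_Ioi
  intro r hr
  have : (0:ℝ) < r := hr
  positivity

lemma sqint (t c q : ℝ) (hq : 0 < q) (hc0 : 0 ≤ c) (hcq : t - c = q) :
    ∫ s in Ioc (0:ℝ) c, ((t-s)^2)⁻¹ = (t-c)⁻¹ - t⁻¹ := by
  have ht0 : 0 < t := by nlinarith
  have hpos : ∀ x ∈ Set.uIcc (0:ℝ) c, 0 < t - x := by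
    intro x hx
    rw [Set.uIcc_of_le hc0] at hx
    have := hx.2; nlinarith
  rw [← intervalIntegral.integral_of_le hc0]
  have hderiv : ∀ x ∈ Set.uIcc (0:ℝ) c,
      HasDerivAt (fun s : ℝ => (t-s)⁻¹) (((t-x)^2)⁻¹) x := by
    intro x hx
    have h1 : HasDerivAt (fun s : ℝ => t - s) (-1) x := (hasDerivAt_id x).const_sub t
    have := h1.fun_inv ((hpos x hx).ne')
    refine this.congr_deriv ?_
    field_simp
  have hcont : ContinuousOn (fun x : ℝ => ((t-x)^2)⁻¹) (Set.uIcc (0:ℝ) c) := by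
    apply ContinuousOn.inv₀
    · fun_prop
    · intro x hx; exact pow_ne_zero 2 ((hpos x hx).ne')
  rw [intervalIntegral.integral_eq_sub_of_hasDerivAt hderiv
    (hcont.intervalIntegrable)]
  norm_num

lemma sbound (t : ℝ) (ht : 0 < t) :
    (∫ s in Ioc (0:ℝ) t, J t s) ≤ 2 / Real.sqrt t := by
  have hq : 0 < Real.sqrt t := Real.sqrt_pos.mpr ht
  rcases le_or_gt t 1 with h1 | h1
  · -- small t
    have step : (∫ s in Ioc (0:ℝ) t, J t s) ≤ ∫ _ in Ioc (0:ℝ) t, (1/t) := by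
      apply integral_mono_of_nonneg
      · exact Filter.Eventually.of_forall fun s => Jnonneg t s
      · exact (integrableOn_const_iff).mpr (Or.inr measure_Ioc_lt_top)
      · filter_upwards [ae_restrict_mem measurableSet_Ioc] with s hs
        exact Jb1 t s ht hs.1.le hs.2
    have hval : (∫ _ in Ioc (0:ℝ) t, (1/t)) = 1 := by
      rw [setIntegral_const]
      simp [Real.volume_Ioc, ENNReal.toReal_ofReal ht.le]
      field_simp
      exact max_eq_left ht.le
    rw [hval] at step
    have : (1:ℝ) ≤ 2 / Real.sqrt t := by
      rw [le_div_iff₀ hq]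
      have : Real.sqrt t ≤ 1 := by
        rw [show (1:ℝ) = Real.sqrt 1 by simp]
        exact Real.sqrt_le_sqrt h1
      linarith
    linarith
  · -- large t
    set q := Real.sqrt t with hqdef
    have hqq : q * q = t := Real.mul_self_sqrt ht.le
    have hq1 : 1 ≤ q := by
      nlinarith [Real.sq_sqrt ht.le]
    have hqt : q ≤ t := by nlinarith
    set c := t - q with hcdef
    have hc0 : 0 ≤ c := by linarith
    have hct : c < t := by linarith
    set g : ℝ → ℝ := fun s => min t⁻¹ ((t-s)^2)⁻¹ with hgdef
    have hgnn : ∀ s, 0 ≤ g s := fun s => le_min (by positivity) (by positivity)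
    have hgle : ∀ s, g s ≤ t⁻¹ := fun s => min_le_left _ _
    have hgm : Measurable g :=
      measurable_const.min (((measurable_const.sub measurable_id).pow_const 2).inv)
    have hgint : ∀ u : Set ℝ, MeasurableSet u → u ⊆ Ioo (0:ℝ) t → IntegrableOn g u := by
      intro u hu hsub
      apply Integrable.mono' (g := fun _ => t⁻¹)
      · apply (integrableOn_const_iff).mpr
        exact Or.inr (lt_of_le_of_lt (measure_mono hsub) measure_Ioo_lt_top)
      · exact hgm.aestronglyMeasurable.restrict
      · exact Filter.Eventually.of_forall fun s => by
          rw [Real.norm_eq_abs, abs_of_nonneg (hgnn s)]; exact hgle s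
    have hsub1 : Ioc (0:ℝ) c ⊆ Ioo (0:ℝ) t := fun x hx => ⟨hx.1, lt_of_le_of_lt hx.2 hct⟩
    have hsub2 : Ioo c t ⊆ Ioo (0:ℝ) t := fun x hx => ⟨lt_of_le_of_lt hc0 hx.1, hx.2⟩
    have step1 : (∫ s in Ioc (0:ℝ) t, J t s) = ∫ s in Ioo (0:ℝ) t, J t s :=
      integral_Ioc_eq_integral_Ioo
    have step2 : (∫ s in Ioo (0:ℝ) t, J t s) ≤ ∫ s in Ioo (0:ℝ) t, g s := by
      apply integral_mono_of_nonneg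
      · exact Filter.Eventually.of_forall fun s => Jnonneg t s
      · exact hgint _ measurableSet_Ioo (subset_refl _)
      · filter_upwards [ae_restrict_mem measurableSet_Ioo] with s hs
        exact le_min (by simpa [one_div] using Jb1 t s ht hs.1.le hs.2.le)
          (Jb2 t s ht.le hs.1.le hs.2)
    have step3 : (∫ s in Ioo (0:ℝ) t, g s)
        = (∫ s in Ioc (0:ℝ) c, g s) + ∫ s in Ioo c t, g s := by
      rw [← Set.Ioc_union_Ioo_eq_Ioo hc0 hct]
      apply setIntegral_union
      · exact Set.disjoint_left.mpr fun x hx hx' => absurd hx.2 (not_le.mpr hx'.1)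
      · exact measurableSet_Ioo
      · exact hgint _ measurableSet_Ioc hsub1
      · exact hgint _ measurableSet_Ioo hsub2
    have step4 : (∫ s in Ioc (0:ℝ) c, g s) ≤ ∫ s in Ioc (0:ℝ) c, ((t-s)^2)⁻¹ := by
      apply integral_mono_of_nonneg
      · exact Filter.Eventually.of_forall fun s => hgnn s
      · have hcont : ContinuousOn (fun x : ℝ => ((t-x)^2)⁻¹) (Set.Icc (0:ℝ) c) := by
          apply ContinuousOn.inv₀
          · fun_prop
          · intro x hx
            have : 0 < t - x := by have := hx.2; simp only [hcdef] at this ⊢; nlinarith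
            positivity
        exact (hcont.integrableOn_Icc).mono_set Set.Ioc_subset_Icc_self
      · exact Filter.Eventually.of_forall fun s => min_le_right _ _
    have step5 : (∫ s in Ioc (0:ℝ) c, ((t-s)^2)⁻¹) = q⁻¹ - t⁻¹ := by
      rw [sqint t c q hq hc0 (by rw [hcdef]; ring)]
      congr 1
      rw [hcdef]; ring_nf
    have step6 : (∫ s in Ioo c t, g s) ≤ ∫ _ in Ioo c t, t⁻¹ := by
      apply integral_mono_of_nonneg
      · exact Filter.Eventually.of_forall fun s => hgnn s
      · exact (integrableOn_const_iff).mpr (Or.inr measure_Ioo_lt_top)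
      · exact Filter.Eventually.of_forall fun s => hgle s
    have step7 : (∫ _ in Ioo c t, t⁻¹ : ℝ) = q⁻¹ := by
      rw [setIntegral_const]
      rw [Real.volume_real_Ioo_of_le (by linarith), smul_eq_mul]
      have : t - c = q := by rw [hcdef]; ring
      rw [this]
      field_simp
      nlinarith
    have htinv : 0 ≤ t⁻¹ := by positivity
    calc (∫ s in Ioc (0:ℝ) t, J t s) ≤ (q⁻¹ - t⁻¹) + q⁻¹ := by
          rw [step1]
          calc _ ≤ ∫ s in Ioo (0:ℝ) t, g s := step2
            _ = _ := step3
            _ ≤ (q⁻¹ - t⁻¹) + q⁻¹ := by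
                have := le_trans step6 (le_of_eq step7)
                have h4 := le_trans step4 (le_of_eq step5)
                linarith
      _ ≤ 2 / q := by rw [div_eq_mul_inv]; linarith

lemma Iint_eq (T : ℝ) : Iint T = ∫ t in Ioc (0:ℝ) T, ∫ s in Ioc (0:ℝ) t, J t s := rfl

lemma Iint_nonneg (T : ℝ) : 0 ≤ Iint T := by
  rw [Iint_eq]
  apply setIntegral_nonneg measurableSet_Ioc
  intro t _
  exact setIntegral_nonneg measurableSet_Ioc fun s _ => Jnonneg t s

lemma Iint_le (T : ℝ) (hT : 0 < T) : Iint T ≤ 4 * Real.sqrt T := by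
  rw [Iint_eq]
  have hmaj : IntegrableOn (fun t : ℝ => 2 * t ^ (-(1:ℝ)/2)) (Ioc (0:ℝ) T) := by
    have h := (intervalIntegral.intervalIntegrable_rpow' (a := 0) (b := T)
      (r := -(1:ℝ)/2) (by norm_num)).const_mul 2
    rwa [intervalIntegrable_iff_integrableOn_Ioc_of_le hT.le] at h
  have step : (∫ t in Ioc (0:ℝ) T, ∫ s in Ioc (0:ℝ) t, J t s)
      ≤ ∫ t in Ioc (0:ℝ) T, 2 * t ^ (-(1:ℝ)/2) := by
    apply integral_mono_of_nonneg
    · exact Filter.Eventually.of_forall fun t =>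
        setIntegral_nonneg measurableSet_Ioc fun s _ => Jnonneg t s
    · exact hmaj
    · filter_upwards [ae_restrict_mem measurableSet_Ioc] with t ht
      have h2 : (2:ℝ) / Real.sqrt t = 2 * t ^ (-(1:ℝ)/2) := by
        rw [show (-(1:ℝ)/2) = -(1/2) by norm_num, Real.rpow_neg ht.1.le,
          ← Real.sqrt_eq_rpow, div_eq_mul_inv]
      rw [← h2]
      exact sbound t ht.1
  have hval : (∫ t in Ioc (0:ℝ) T, 2 * t ^ (-(1:ℝ)/2)) = 4 * Real.sqrt T := by
    rw [← intervalIntegral.integral_of_le hT.le, intervalIntegral.integral_const_mul,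
      integral_rpow (Or.inl (by norm_num))]
    rw [Real.zero_rpow (by norm_num), Real.sqrt_eq_rpow]
    norm_num
    ring
  rw [hval] at step
  exact step

theorem Iint_sublinear :
    (∃ C > (0 : ℝ), ∃ T₀ > (0 : ℝ), ∀ T ≥ T₀, Iint T ≤ C * T ^ ((3 : ℝ) / 4)) ∧
      Tendsto (fun T => Iint T / T) atTop (nhds 0) := by
  constructor
  · refine ⟨4, by norm_num, 1, by norm_num, fun T hT => ?_⟩
    have hT0 : (0:ℝ) < T := lt_of_lt_of_le one_pos hT
    calc Iint T ≤ 4 * Real.sqrt T := Iint_le T hT0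
      _ = 4 * T ^ ((1:ℝ)/2) := by rw [Real.sqrt_eq_rpow]
      _ ≤ 4 * T ^ ((3:ℝ)/4) := by
          have := Real.rpow_le_rpow_of_exponent_le hT (by norm_num : (1:ℝ)/2 ≤ 3/4)
          linarith
  · apply tendsto_of_tendsto_of_tendsto_of_le_of_le'
      (g := fun _ : ℝ => (0:ℝ)) (h := fun T : ℝ => 4 * T ^ (-(1:ℝ)/2))
    · exact tendsto_const_nhds
    · have := (tendsto_rpow_neg_atTop (y := (1:ℝ)/2) (by norm_num)).const_mul (4:ℝ)
      simpa [neg_div] using this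
    · filter_upwards [eventually_gt_atTop (0:ℝ)] with T hT
      exact div_nonneg (Iint_nonneg T) hT.le
    · filter_upwards [eventually_ge_atTop (1:ℝ)] with T hT
      have hT0 : (0:ℝ) < T := lt_of_lt_of_le one_pos hT
      have h1 : Iint T / T ≤ 4 * Real.sqrt T / T := by
        gcongr
        exact Iint_le T hT0
      have h2 : 4 * Real.sqrt T / T = 4 * T ^ (-(1:ℝ)/2) := by
        rw [Real.sqrt_eq_rpow, show (-(1:ℝ)/2) = -(1/2) by norm_num,
          Real.rpow_neg hT0.le]
        rw [mul_div_assoc]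
        congr 1
        have key : T ^ ((1:ℝ)/2) * T ^ ((1:ℝ)/2) = T := by
          rw [← Real.rpow_add hT0]; norm_num
        have hp : (0:ℝ) < T ^ ((1:ℝ)/2) := by positivity
        field_simp
        linarith [key]
      rw [h2] at h1
      exact h1
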